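/- Let k ≥ 1 and t ≥ 2 be integers, and let G be a graph on more than k vertices such that every vertex set W ⊆ V(G) with k/2 ≤ |W| ≤ k has vertex boundary satisfying |∂_v(W)| ≥ t. Then G contains a cycle of length at least t + 1. -/

import Mathlib

open MeasureTheory Filter

noncomputable section

/-- The `d`-dimensional hypercube graph `Q^d`, on vertex set `{0,1}^d`. -/
def cubeGraph (d : ℕ) : SimpleGraph (Fin d → Bool) where
  Adj x y := hammingDist x y = 1
  symm := ⟨fun x y h => by show hammingDist y x = 1; rw [hammingDist_comm]; exact h⟩
  loopless := ⟨fun x h => absurd (show hammingDist x x = 1 from h) (by simp)⟩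

/-- The spanning subgraph of `G` consisting of those edges `e` with `ω e = true`. -/
def percolate {V : Type*} (G : SimpleGraph V) (ω : Sym2 V → Bool) : SimpleGraph V where
  Adj x y := G.Adj x y ∧ ω s(x, y) = true
  symm := ⟨by
    rintro x y ⟨h1, h2⟩
    exact ⟨h1.symm, by rwa [Sym2.eq_swap]⟩⟩
  loopless := ⟨fun x h => G.irrefl h.1⟩

/-- The Bernoulli measure on `Bool` with success probability `p` (truncated to `[0,1]`). -/
def bernoulliBool (p : ℝ) : Measure Bool :=
  (PMF.bernoulli (min (Real.toNNReal p) 1) (min_le_right _ _)).toMeasure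

instance (p : ℝ) : IsProbabilityMeasure (bernoulliBool p) := by
  unfold bernoulliBool; infer_instance

/-- The probability measure on edge-configurations of the `d`-dimensional hypercube in which
each potential edge is retained independently with probability `p`; the configuration space
is `Sym2 (Fin d → Bool) → Bool`, and `Q^d_p` is `percolate (cubeGraph d) ω`. -/
def cubeMeasure (d : ℕ) (p : ℝ) : Measure (Sym2 (Fin d → Bool) → Bool) :=
  Measure.pi fun _ => bernoulliBool p

/-- `C` is a largest connected component of `H`. -/
def IsLargestComponent {V : Type*} [Fintype V] (H : SimpleGraph V)
    (C : H.ConnectedComponent) : Prop :=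
  ∀ C' : H.ConnectedComponent, C'.supp.ncard ≤ C.supp.ncard

/-- The edge boundary of the vertex set `S` in the graph `H`: the set of edges of `H` with
exactly one endpoint in `S`. -/
def edgeBoundary {V : Type*} (H : SimpleGraph V) (S : Set V) : Set (Sym2 V) :=
  {e | e ∈ H.edgeSet ∧ ∃ x y, e = s(x, y) ∧ x ∈ S ∧ y ∉ S}

/-- The vertex boundary of the vertex set `S` in the graph `H`: the set of vertices outside
`S` having a neighbour in `S`. -/
def vertexBoundary {V : Type*} (H : SimpleGraph V) (S : Set V) : Set V :=
  {v | v ∉ S ∧ ∃ u ∈ S, H.Adj u v}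

/-- The survival probability of a Galton–Watson branching process with Poisson(`c`) offspring
distribution: one minus the extinction probability, the extinction probability being the least
fixed point in `[0,1]` of the probability generating function `s ↦ exp (c * (s - 1))` of the
Poisson(`c`) distribution. -/
def poissonSurvival (c : ℝ) : ℝ :=
  1 - sInf {s : ℝ | s ∈ Set.Icc (0 : ℝ) 1 ∧ Real.exp (c * (s - 1)) = s}

/-- `H` contains a complete minor of order `t`: there are `t` pairwise disjoint connected
branch sets with an edge of `H` between any two of them. -/
def HasCompleteMinor {V : Type*} (H : SimpleGraph V) (t : ℕ) : Prop :=
  ∃ B : Fin t → Set V,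
    (∀ i, (H.induce (B i)).Connected) ∧
    (Pairwise fun i j => Disjoint (B i) (B j)) ∧
    (∀ i j, i ≠ j → ∃ x ∈ B i, ∃ y ∈ B j, H.Adj x y)


section CycleFromExpansion

open SimpleGraph SimpleGraph.Walk
open scoped Classical

variable {V : Type*} {G : SimpleGraph V}

/-- `u` and `v` are joined by a walk whose support lies in `A`. -/
private def CFEW (G : SimpleGraph V) (A : Finset V) (u v : V) : Prop :=
  ∃ w : G.Walk u v, ∀ z ∈ w.support, z ∈ A

private lemma CFEW.mem_left {A : Finset V} {u v : V} (h : CFEW G A u v) : u ∈ A := by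
  obtain ⟨w, hw⟩ := h; exact hw _ w.start_mem_support

private lemma CFEW.mem_right {A : Finset V} {u v : V} (h : CFEW G A u v) : v ∈ A := by
  obtain ⟨w, hw⟩ := h; exact hw _ w.end_mem_support

private lemma CFEW.symm {A : Finset V} {u v : V} (h : CFEW G A u v) : CFEW G A v u := by
  obtain ⟨w, hw⟩ := h
  exact ⟨w.reverse, fun z hz => hw z (by simpa [Walk.support_reverse] using hz)⟩

private lemma CFEW.trans {A : Finset V} {u v w : V} (h1 : CFEW G A u v) (h2 : CFEW G A v w) :
    CFEW G A u w := by
  obtain ⟨p, hp⟩ := h1; obtain ⟨q, hq⟩ := h2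
  refine ⟨p.append q, fun z hz => ?_⟩
  rcases (Walk.mem_support_append_iff _ _).mp hz with h | h
  · exact hp z h
  · exact hq z h

private lemma CFEW.refl {A : Finset V} {u : V} (h : u ∈ A) : CFEW G A u u :=
  ⟨Walk.nil, by simp [h]⟩

private lemma CFEW.adj {A : Finset V} {u v z : V} (h : CFEW G A u v) (hadj : G.Adj v z)
    (hz : z ∈ A) : CFEW G A u z := by
  obtain ⟨w, hw⟩ := h
  refine ⟨w.concat hadj, fun y hy => ?_⟩
  rw [Walk.support_concat, List.mem_append] at hy
  rcases hy with hy | hy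
  · exact hw y hy
  · simp at hy; subst hy; exact hz

private lemma CFEW.of_support {A : Finset V} {u v z : V} (w : G.Walk u v)
    (hw : ∀ y ∈ w.support, y ∈ A) (hz : z ∈ w.support) : CFEW G A u z :=
  ⟨w.takeUntil z hz, fun y hy => hw y (Walk.support_takeUntil_subset w hz hy)⟩

/-- The connected component of `u` inside the vertex set `A`. -/
private noncomputable def CFEcomp (G : SimpleGraph V) (A : Finset V) (u : V) : Finset V :=
  A.filter (CFEW G A u)

private lemma CFEcomp_mem {A : Finset V} {u v : V} :
    v ∈ CFEcomp G A u ↔ v ∈ A ∧ CFEW G A u v := Finset.mem_filter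

private lemma CFEcomp_subset {A : Finset V} {u : V} : CFEcomp G A u ⊆ A :=
  Finset.filter_subset _ _

private lemma self_mem_CFEcomp {A : Finset V} {u : V} (h : u ∈ A) : u ∈ CFEcomp G A u :=
  CFEcomp_mem.mpr ⟨h, CFEW.refl h⟩

private lemma CFEcomp_eq {A : Finset V} {u v : V} (h : v ∈ CFEcomp G A u) :
    CFEcomp G A v = CFEcomp G A u := by
  obtain ⟨hvA, hWuv⟩ := CFEcomp_mem.mp h
  ext z
  simp only [CFEcomp_mem]
  exact ⟨fun ⟨hz, hw⟩ => ⟨hz, hWuv.trans hw⟩, fun ⟨hz, hw⟩ => ⟨hz, hWuv.symm.trans hw⟩⟩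

/-- Greedy selection of a subfamily with total weight between `k/2` and `k`. -/
private lemma CFE_exists_subfamily {α : Type*} {k : ℕ} (s : Finset α) (f : α → ℕ)
    (hf : ∀ a ∈ s, f a ≤ k) (h : k ≤ 2 * ∑ a ∈ s, f a) :
    ∃ u ⊆ s, k ≤ 2 * ∑ a ∈ u, f a ∧ ∑ a ∈ u, f a ≤ k := by
  classical
  induction s using Finset.induction_on with
  | empty => exact ⟨∅, by simp, by simpa using h, by simp⟩
  | @insert a s ha ih =>
    by_cases h2 : k ≤ 2 * ∑ x ∈ s, f x
    · obtain ⟨u, hu, h3, h4⟩ := ih (fun x hx => hf x (Finset.mem_insert_of_mem hx)) h2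
      exact ⟨u, hu.trans (Finset.subset_insert _ _), h3, h4⟩
    · by_cases h3 : k ≤ 2 * f a
      · refine ⟨{a}, by simp [Finset.singleton_subset_iff], by simpa using h3, by
          simpa using hf a (Finset.mem_insert_self _ _)⟩
      · refine ⟨insert a s, le_refl _, h, ?_⟩
        rw [Finset.sum_insert ha] at h ⊢
        omega

/-- Dropping everything up to the last visit of the root. -/
private lemma CFE_exists_tail {A : Finset V} {r : V} :
    ∀ (n : ℕ) {v : V} (w : G.Walk r v), w.length ≤ n → (∀ z ∈ w.support, z ∈ A) → v ≠ r →
    ∃ (r' : V) (w' : G.Walk r' v), G.Adj r r' ∧ (∀ z ∈ w'.support, z ∈ A) ∧ r ∉ w'.support := by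
  intro n
  induction n with
  | zero =>
    intro v w hlen _ hne
    exact absurd (Walk.eq_of_length_eq_zero (Nat.le_zero.mp hlen)).symm hne
  | succ n ih =>
    intro v w hlen hsup hne
    cases w with
    | nil => exact absurd rfl hne
    | cons hadj w1 =>
      rename_i b
      by_cases hr : r ∈ w1.support
      · refine ih (w1.dropUntil r hr) ?_ ?_ hne
        · have := Walk.length_dropUntil_le w1 hr
          simp only [Walk.length_cons] at hlen
          omega
        · intro z hz
          exact hsup z (by
            simp only [Walk.support_cons, List.mem_cons]
            exact Or.inr (Walk.support_dropUntil_subset w1 hr hz))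
      · exact ⟨b, w1, hadj, fun z hz => hsup z (by simp [Walk.support_cons, hz]), hr⟩

private lemma CFE_isPath_append {u v w : V} {p : G.Walk u v} {q : G.Walk v w}
    (hp : p.IsPath) (hq : q.IsPath)
    (hdisj : ∀ z, z ∈ p.support → z ∈ q.support → z = v) : (p.append q).IsPath := by
  induction p with
  | nil => simpa using hq
  | cons hadj p1 ih =>
    rename_i a b c
    rw [Walk.cons_append, Walk.cons_isPath_iff]
    rw [Walk.cons_isPath_iff] at hp
    constructor
    · exact ih hp.1 hq (fun z hz hz' => hdisj z (by simp [Walk.support_cons, hz]) hz')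
    · intro hmem
      rcases (Walk.mem_support_append_iff _ _).mp hmem with hm | hm
      · exact hp.2 hm
      · have := hdisj a (by simp [Walk.support_cons]) hm
        subst this
        exact hp.2 p1.end_mem_support

/-- From a finite set `B` of at least `t` vertices on a path `R` ending at `x`, extract a
suffix of `R` starting at some vertex of `B` with length at least `|B| - 1`. -/
private lemma CFE_exists_suffix {x : V} :
    ∀ {r : V} (R : G.Walk r x), R.IsPath → ∀ B : Finset V, B.Nonempty →
    (∀ b ∈ B, b ∈ R.support) →
    ∃ a ∈ B, ∃ R2 : G.Walk a x, R2.IsPath ∧ (∀ z ∈ R2.support, z ∈ R.support) ∧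
      B.card ≤ R2.length + 1 := by
  intro r R
  induction R with
  | @nil u0 =>
    intro _ B hBne hBsub
    obtain ⟨b, hb⟩ := hBne
    have hbx : b = u0 := by simpa using hBsub b hb
    subst hbx
    refine ⟨b, hb, Walk.nil, Walk.IsPath.nil, fun z hz => hz, ?_⟩
    have hsub : B ⊆ {b} := fun c hc => by simpa using hBsub c hc
    simpa using Finset.card_le_card hsub
  | @cons u0 v0 x0 hadj w ihw =>
    intro hP B hBne hBsub
    by_cases hu : u0 ∈ B
    · refine ⟨u0, hu, Walk.cons hadj w, hP, fun z hz => hz, ?_⟩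
      have h1 : B ⊆ (Walk.cons hadj w).support.toFinset := fun c hc => by
        simpa using hBsub c hc
      have h2 := Finset.card_le_card h1
      have h3 : (Walk.cons hadj w).support.toFinset.card ≤ (Walk.cons hadj w).support.length :=
        (Walk.cons hadj w).support.toFinset_card_le
      have h4 := (Walk.cons hadj w).length_support
      omega
    · have hwpath : w.IsPath := ((Walk.cons_isPath_iff _ _).mp hP).1
      have hBsub' : ∀ c ∈ B, c ∈ w.support := by
        intro c hc
        have hc2 := hBsub c hc
        rw [Walk.support_cons, List.mem_cons] at hc2
        rcases hc2 with h' | h'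
        · exact absurd (h' ▸ hc) hu
        · exact h'
      obtain ⟨a, haB, R2, hR2p, hR2s, hR2len⟩ := ihw hwpath B hBne hBsub'
      exact ⟨a, haB, R2, hR2p, fun z hz => by simp [Walk.support_cons, hR2s z hz], hR2len⟩

/-- The key structural lemma (normal-tree / DFS argument): inside a connected set `S` of more
than `k` vertices, rooted at `r`, there is a path `R` from `r` to some `x` and a set `U`
disjoint from `R` of size between `k/2` and `k`, all of whose neighbours inside `S` lie on
`R ∪ U`, and each of whose vertices is joined to `x` within `U ∪ {x}`. -/
private lemma CFE_NT {k : ℕ} :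
    ∀ (n : ℕ) (S : Finset V), S.card ≤ n → ∀ r ∈ S,
    (∀ v ∈ S, ∃ w : G.Walk r v, ∀ z ∈ w.support, z ∈ S) → k < S.card →
    ∃ (x : V) (R : G.Walk r x) (U : Finset V), R.IsPath ∧ (∀ z ∈ R.support, z ∈ S) ∧ U ⊆ S ∧
      (∀ z ∈ R.support, z ∉ U) ∧ k ≤ 2 * U.card ∧ U.card ≤ k ∧
      (∀ u ∈ U, ∀ z, G.Adj u z → z ∈ S → z ∈ U ∨ z ∈ R.support) ∧
      (∀ u ∈ U, ∃ Q : G.Walk u x, ∀ z ∈ Q.support, z = x ∨ z ∈ U) := by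
  intro n
  induction n using Nat.strong_induction_on with
  | _ n ih =>
  intro S hSn r hr hconn hcard
  set S' : Finset V := S.erase r with hS'def
  have hS'sub : S' ⊆ S := Finset.erase_subset _ _
  have hrS' : r ∉ S' := Finset.notMem_erase _ _
  have hS'card : S'.card = S.card - 1 := Finset.card_erase_of_mem hr
  have hdrop : ∀ v ∈ S', ∃ (r' : V) (w' : G.Walk r' v),
      G.Adj r r' ∧ (∀ z ∈ w'.support, z ∈ S') ∧ r' ∈ S' := by
    intro v hv
    have hvS : v ∈ S := hS'sub hv
    have hvr : v ≠ r := (Finset.mem_erase.mp hv).1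
    obtain ⟨w, hw⟩ := hconn v hvS
    obtain ⟨r', w', hadj, hsup, hrns⟩ := CFE_exists_tail w.length w le_rfl hw hvr
    have hsub' : ∀ z ∈ w'.support, z ∈ S' := by
      intro z hz
      refine Finset.mem_erase.mpr ⟨?_, hsup z hz⟩
      rintro rfl; exact hrns hz
    exact ⟨r', w', hadj, hsub', hsub' _ w'.start_mem_support⟩
  by_cases hbig : ∃ v ∈ S', k < (CFEcomp G S' v).card
  · -- recurse into a big component
    obtain ⟨v, hv, hvc⟩ := hbig
    obtain ⟨r', w', hadj, hw'sub, hr'S'⟩ := hdrop v hv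
    have hWr'v : CFEW G S' r' v := ⟨w', hw'sub⟩
    set C : Finset V := CFEcomp G S' r' with hCdef
    have hvC : v ∈ C := CFEcomp_mem.mpr ⟨hv, hWr'v⟩
    have hcompv : CFEcomp G S' v = C := CFEcomp_eq hvC
    have hkC : k < C.card := by rwa [hcompv] at hvc
    have hCS' : C ⊆ S' := CFEcomp_subset
    have hCn : C.card < n := by
      have h1 : C.card ≤ S'.card := Finset.card_le_card hCS'
      have h2 : 1 ≤ S.card := Finset.card_pos.mpr ⟨r, hr⟩
      omega
    have hr'C : r' ∈ C := self_mem_CFEcomp hr'S'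
    have hconnC : ∀ u ∈ C, ∃ w : G.Walk r' u, ∀ z ∈ w.support, z ∈ C := by
      intro u hu
      obtain ⟨huS', hWr'u⟩ := CFEcomp_mem.mp hu
      obtain ⟨ω, hω⟩ := hWr'u
      refine ⟨ω, fun z hz => ?_⟩
      exact CFEcomp_mem.mpr ⟨hω z hz, CFEW.of_support ω hω hz⟩
    obtain ⟨x, R', U, hR'p, hR'sub, hUC, hR'U, hkU, hUk, hclo, hQ⟩ :=
      ih C.card hCn C le_rfl r' hr'C hconnC hkC
    have hrnotR' : r ∉ R'.support := fun hmem => hrS' (hCS' (hR'sub r hmem))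
    refine ⟨x, Walk.cons hadj R', U, ?_, ?_, fun z hz => hS'sub (hCS' (hUC hz)), ?_, hkU, hUk,
      ?_, hQ⟩
    · exact (Walk.cons_isPath_iff _ _).mpr ⟨hR'p, hrnotR'⟩
    · intro z hz
      rw [Walk.support_cons, List.mem_cons] at hz
      rcases hz with rfl | hz
      · exact hr
      · exact hS'sub (hCS' (hR'sub z hz))
    · intro z hz
      rw [Walk.support_cons, List.mem_cons] at hz
      rcases hz with rfl | hz
      · exact fun hzU => hrS' (hCS' (hUC hzU))
      · exact hR'U z hz
    · intro u hu z hadjz hzS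
      by_cases hzr : z = r
      · subst hzr
        exact Or.inr (by simp [Walk.support_cons])
      · have hzS' : z ∈ S' := Finset.mem_erase.mpr ⟨hzr, hzS⟩
        have huC : u ∈ C := hUC hu
        have huS' : u ∈ S' := hCS' huC
        have hWuz : CFEW G S' u z := (CFEW.refl huS').adj hadjz hzS'
        have hzC : z ∈ C := by
          have h9 : z ∈ CFEcomp G S' u := CFEcomp_mem.mpr ⟨hzS', hWuz⟩
          rwa [CFEcomp_eq huC] at h9
        rcases hclo u hu z hadjz hzC with h | h
        · exact Or.inl h
        · exact Or.inr (by simp [Walk.support_cons, h])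
  · -- all components are small: assemble U from whole components, R trivial
    push_neg at hbig
    set 𝒞 : Finset (Finset V) := S'.image (CFEcomp G S') with h𝒞def
    have hpart : S' = 𝒞.biUnion id := by
      ext z
      simp only [Finset.mem_biUnion, id]
      constructor
      · intro hz
        exact ⟨CFEcomp G S' z, Finset.mem_image_of_mem _ hz, self_mem_CFEcomp hz⟩
      · rintro ⟨C, hC, hzC⟩
        obtain ⟨w, _, rfl⟩ := Finset.mem_image.mp hC
        exact CFEcomp_subset hzC
    have hdisj : ∀ C ∈ 𝒞, ∀ D ∈ 𝒞, C ≠ D → Disjoint C D := by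
      intro C hC D hD hne
      rw [Finset.disjoint_left]
      intro z hzC hzD
      obtain ⟨c, _, rfl⟩ := Finset.mem_image.mp hC
      obtain ⟨d, _, rfl⟩ := Finset.mem_image.mp hD
      exact hne ((CFEcomp_eq hzC).symm.trans (CFEcomp_eq hzD))
    have hsum : S'.card = ∑ C ∈ 𝒞, C.card := by
      rw [hpart]; exact Finset.card_biUnion hdisj
    have hSk : k ≤ S'.card := by
      have h2 : 1 ≤ S.card := Finset.card_pos.mpr ⟨r, hr⟩
      omega
    have hfk : ∀ C ∈ 𝒞, C.card ≤ k := by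
      intro C hC
      obtain ⟨w, hw, rfl⟩ := Finset.mem_image.mp hC
      exact hbig w hw
    obtain ⟨𝒟, h𝒟, hk𝒟, h𝒟k⟩ := CFE_exists_subfamily 𝒞 Finset.card hfk (by omega)
    set U : Finset V := 𝒟.biUnion id with hUdef
    have hUcard : U.card = ∑ C ∈ 𝒟, C.card :=
      Finset.card_biUnion (fun C hC D hD hne => hdisj C (h𝒟 hC) D (h𝒟 hD) hne)
    have hUS' : U ⊆ S' := by
      intro z hz
      obtain ⟨C, hC, hzC⟩ := Finset.mem_biUnion.mp hz
      rw [hpart]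
      exact Finset.mem_biUnion.mpr ⟨C, h𝒟 hC, hzC⟩
    have hcompU : ∀ u ∈ U, CFEcomp G S' u ⊆ U := by
      intro u hu
      obtain ⟨C, hC, huC⟩ := Finset.mem_biUnion.mp hu
      obtain ⟨w0, _, rfl⟩ := Finset.mem_image.mp (h𝒟 hC)
      intro z hz
      rw [CFEcomp_eq (show u ∈ CFEcomp G S' w0 from huC)] at hz
      exact Finset.mem_biUnion.mpr ⟨_, hC, hz⟩
    refine ⟨r, Walk.nil, U, Walk.IsPath.nil, by simp [Walk.support_nil, hr],
      fun z hz => hS'sub (hUS' hz), ?_, ?_, ?_, ?_, ?_⟩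
    · intro z hz
      rw [Walk.support_nil, List.mem_singleton] at hz
      subst hz
      exact fun hrU => hrS' (hUS' hrU)
    · omega
    · omega
    · intro u hu z hadjz hzS
      by_cases hzr : z = r
      · exact Or.inr (by simp [Walk.support_nil, hzr])
      · have hzS' : z ∈ S' := Finset.mem_erase.mpr ⟨hzr, hzS⟩
        have huS' : u ∈ S' := hUS' hu
        have hWuz : CFEW G S' u z := (CFEW.refl huS').adj hadjz hzS'
        exact Or.inl (hcompU u hu (CFEcomp_mem.mpr ⟨hzS', hWuz⟩))
    · intro u hu
      have huS' : u ∈ S' := hUS' hu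
      obtain ⟨r', w', hadj, hsub', _⟩ := hdrop u huS'
      refine ⟨(w'.reverse).concat hadj.symm, fun z hz => ?_⟩
      rw [Walk.support_concat, List.mem_append] at hz
      rcases hz with hz | hz
      · rw [Walk.support_reverse, List.mem_reverse] at hz
        refine Or.inr (hcompU u hu ?_)
        have hWr'z : CFEW G S' r' z := CFEW.of_support w' hsub' hz
        have hWr'u : CFEW G S' r' u := ⟨w', hsub'⟩
        exact CFEcomp_mem.mpr ⟨hsub' z hz, hWr'u.symm.trans hWr'z⟩
      · simp at hz; exact Or.inl hz


private lemma CFE_main {V : Type*} [Fintype V] (G : SimpleGraph V) (k t : ℕ)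
    (hk : 1 ≤ k) (ht : 2 ≤ t) (hV : k < Fintype.card V)
    (h : ∀ W : Set V, (k : ℝ) / 2 ≤ (W.ncard : ℝ) → W.ncard ≤ k →
      t ≤ (vertexBoundary G W).ncard) :
    ∃ (v : V) (w : G.Walk v v), w.IsCycle ∧ t + 1 ≤ w.length := by
  classical
  have hcard_half : ∀ U : Finset V, k ≤ 2 * U.card → U.card ≤ k →
      t ≤ (vertexBoundary G (↑U : Set V)).ncard := by
    intro U h1 h2
    refine h ↑U ?_ (by rwa [Set.ncard_coe_finset]) <;> rw [Set.ncard_coe_finset]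
    rw [div_le_iff₀ (by norm_num : (0:ℝ) < 2)]
    exact_mod_cast by omega
  -- Step 1: some connected component has more than k vertices.
  have hbig : ∃ r : V, k < (CFEcomp G Finset.univ r).card := by
    by_contra hno
    push_neg at hno
    set 𝒞 : Finset (Finset V) := Finset.univ.image (CFEcomp G Finset.univ) with h𝒞def
    have hpart : (Finset.univ : Finset V) = 𝒞.biUnion id := by
      ext z
      simp only [Finset.mem_biUnion, id, Finset.mem_univ, true_iff]
      exact ⟨CFEcomp G Finset.univ z, Finset.mem_image_of_mem _ (Finset.mem_univ z),
        self_mem_CFEcomp (Finset.mem_univ z)⟩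
    have hdisj : ∀ C ∈ 𝒞, ∀ D ∈ 𝒞, C ≠ D → Disjoint C D := by
      intro C hC D hD hne
      rw [Finset.disjoint_left]
      intro z hzC hzD
      obtain ⟨c, _, rfl⟩ := Finset.mem_image.mp hC
      obtain ⟨d, _, rfl⟩ := Finset.mem_image.mp hD
      exact hne ((CFEcomp_eq hzC).symm.trans (CFEcomp_eq hzD))
    have hsum : Fintype.card V = ∑ C ∈ 𝒞, C.card := by
      rw [← Finset.card_univ, hpart]; exact Finset.card_biUnion hdisj
    obtain ⟨𝒟, h𝒟, hk𝒟, h𝒟k⟩ := CFE_exists_subfamily 𝒞 Finset.card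
      (fun C hC => by obtain ⟨c, _, rfl⟩ := Finset.mem_image.mp hC; exact hno c) (by omega)
    set U : Finset V := 𝒟.biUnion id with hUdef
    have hUcard : U.card = ∑ C ∈ 𝒟, C.card :=
      Finset.card_biUnion (fun C hC D hD hne => hdisj C (h𝒟 hC) D (h𝒟 hD) hne)
    have hclosed : vertexBoundary G (↑U : Set V) = ∅ := by
      ext v
      simp only [Set.mem_empty_iff_false, iff_false]
      rintro ⟨hvU, u, huU, hadj⟩
      obtain ⟨C, hC, huC⟩ := Finset.mem_biUnion.mp huU
      obtain ⟨w0, _, rfl⟩ := Finset.mem_image.mp (h𝒟 hC)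
      have hvC : v ∈ CFEcomp G Finset.univ u :=
        CFEcomp_mem.mpr ⟨Finset.mem_univ v, (CFEW.refl (Finset.mem_univ u)).adj hadj
          (Finset.mem_univ v)⟩
      rw [CFEcomp_eq (show u ∈ CFEcomp G Finset.univ w0 from huC)] at hvC
      exact hvU (Finset.mem_biUnion.mpr ⟨_, hC, hvC⟩)
    have := hcard_half U (by omega) (by omega)
    rw [hclosed] at this
    simp at this
    omega
  obtain ⟨r, hrbig⟩ := hbig
  set S : Finset V := CFEcomp G Finset.univ r with hSdef
  have hrS : r ∈ S := self_mem_CFEcomp (Finset.mem_univ r)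
  have hconn : ∀ v ∈ S, ∃ w : G.Walk r v, ∀ z ∈ w.support, z ∈ S := by
    intro v hv
    obtain ⟨w, hw⟩ := (CFEcomp_mem.mp hv).2
    exact ⟨w, fun z hz => CFEcomp_mem.mpr ⟨Finset.mem_univ z, CFEW.of_support w hw hz⟩⟩
  obtain ⟨x, R, U, hRp, hRsub, hUS, hRU, hkU, hUk, hclo, hQ⟩ :=
    CFE_NT S.card S le_rfl r hrS hconn hrbig
  -- the vertex boundary of U lies on R and has at least t vertices
  have hbd := hcard_half U hkU hUk
  set B : Finset V := (vertexBoundary G (↑U : Set V)).toFinset with hBdef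
  have hBcard : t ≤ B.card := by
    rwa [Set.ncard_eq_toFinset_card'] at hbd
  have hBmem : ∀ b ∈ B, b ∉ U ∧ ∃ u ∈ U, G.Adj u b := by
    intro b hb
    rw [Set.mem_toFinset] at hb
    obtain ⟨hbU, u, huU, hadj⟩ := hb
    exact ⟨by simpa using hbU, u, by simpa using huU, hadj⟩
  have hBsub : ∀ b ∈ B, b ∈ R.support := by
    intro b hb
    obtain ⟨hbU, u, huU, hadj⟩ := hBmem b hb
    have hbS : b ∈ S := by
      have huS : u ∈ S := hUS huU
      exact CFEcomp_mem.mpr ⟨Finset.mem_univ b,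
        ((CFEcomp_mem.mp huS).2).adj hadj (Finset.mem_univ b)⟩
    rcases hclo u huU b hadj hbS with h' | h'
    · exact absurd h' hbU
    · exact h'
  have hBne : B.Nonempty := Finset.card_pos.mp (by omega)
  obtain ⟨a, haB, R2, hR2p, hR2s, hR2len⟩ := CFE_exists_suffix R hRp B hBne hBsub
  obtain ⟨haU, u, huU, hadj⟩ := hBmem a haB
  have hxR : x ∈ R.support := R.end_mem_support
  have hxU : x ∉ U := hRU x hxR
  have hax : a ≠ x := by
    rintro rfl
    have : R2 = Walk.nil := Walk.isPath_iff_eq_nil.mp hR2p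
    subst this
    simp only [Walk.length_nil] at hR2len
    omega
  obtain ⟨Q0, hQ0⟩ := hQ u huU
  set Qu : G.Walk u x := Q0.bypass with hQudef
  have hQup : Qu.IsPath := Q0.bypass_isPath
  have hQus : ∀ z ∈ Qu.support, z = x ∨ z ∈ U := fun z hz =>
    hQ0 z (Q0.support_bypass_subset hz)
  have hux : u ≠ x := fun h' => hxU (h' ▸ huU)
  have hQulen : 1 ≤ Qu.length := by
    rcases Nat.eq_zero_or_pos Qu.length with h' | h'
    · exact absurd (Walk.eq_of_length_eq_zero h') hux
    · exact h'
  -- assemble the cycle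
  have hP' : (Qu.append R2.reverse).IsPath := by
    refine CFE_isPath_append hQup hR2p.reverse ?_
    intro z hz hz'
    rw [Walk.support_reverse, List.mem_reverse] at hz'
    rcases hQus z hz with h' | h'
    · exact h'
    · exact absurd h' (hRU z (hR2s z hz'))
  have hedge : s(a, u) ∉ (Qu.append R2.reverse).edges := by
    intro hmem
    rw [Walk.edges_append, List.mem_append] at hmem
    rcases hmem with hmem | hmem
    · have haQ : a ∈ Qu.support := Qu.fst_mem_support_of_mem_edges hmem
      rcases hQus a haQ with h' | h'
      · exact hax h'
      · exact haU h'
    · rw [Walk.edges_reverse, List.mem_reverse] at hmem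
      have huR : u ∈ R2.support := R2.snd_mem_support_of_mem_edges hmem
      exact hRU u (hR2s u huR) huU
  refine ⟨a, Walk.cons hadj.symm (Qu.append R2.reverse), ?_, ?_⟩
  · exact (Walk.cons_isCycle_iff _ _).mpr ⟨hP', hedge⟩
  · rw [Walk.length_cons, Walk.length_append, Walk.length_reverse]
    omega

end CycleFromExpansion

/-- a graph on more than `k` vertices in which every vertex set `W` with
`k/2 ≤ |W| ≤ k` has vertex boundary of size at least `t` contains a cycle of length at
least `t + 1`. -/
theorem cycle_from_expansion {V : Type*} [Fintype V] (G : SimpleGraph V) (k t : ℕ)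
    (hk : 1 ≤ k) (ht : 2 ≤ t) (hV : k < Fintype.card V)
    (h : ∀ W : Set V, (k : ℝ) / 2 ≤ (W.ncard : ℝ) → W.ncard ≤ k →
      t ≤ (vertexBoundary G W).ncard) :
    ∃ (v : V) (w : G.Walk v v), w.IsCycle ∧ t + 1 ≤ w.length := by
  exact CFE_main G k t hk ht hV h

end
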